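/- Soundness of recursiveness (C6) in recursive models: for every recursive causal model T over S and all endogenous variables X_0, X_1, …, X_k, if X_0 affects X_1 in T, X_1 affects X_2 in T, …, and X_{k−1} affects X_k in T, then X_k does not affect X_0 in T. -/

import Mathlib

/-- A signature `S = (U, V, R)`: finite (disjoint) sets of exogenous variables `U` and
endogenous variables `V`, together with a nonempty finite set (here: type) of possible
values for each variable. -/
structure Signature where
  U : Type
  V : Type
  uFin : Fintype U
  vFin : Fintype V
  vDecEq : DecidableEq V
  valU : U → Type
  valV : V → Type
  valUFin : ∀ u, Fintype (valU u)
  valVFin : ∀ X, Fintype (valV X)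
  valUNonempty : ∀ u, Nonempty (valU u)
  valVNonempty : ∀ X, Nonempty (valV X)

attribute [instance] Signature.uFin Signature.vFin Signature.vDecEq
  Signature.valUFin Signature.valVFin Signature.valUNonempty Signature.valVNonempty

/-- The standing assumption `|R(Y)| ≥ 2` for every variable `Y`. -/
def Signature.Standard (S : Signature) : Prop :=
  (∀ u, 2 ≤ Fintype.card (S.valU u)) ∧ (∀ X, 2 ≤ Fintype.card (S.valV X))

/-- A setting `u⃗` of values for all the exogenous variables. -/
abbrev Signature.Context (S : Signature) : Type := ∀ u : S.U, S.valU u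

/-- An assignment of values to all the endogenous variables. -/
abbrev Signature.Assignment (S : Signature) : Type := ∀ X : S.V, S.valV X

/-- An intervention `X⃗ ← x⃗`: a vector of distinct endogenous variables together with
values for them, encoded as a partial assignment. -/
abbrev Signature.Intervention (S : Signature) : Type := ∀ X : S.V, Option (S.valV X)

/-- The empty intervention (`[true]`). -/
def Signature.emptyInt (S : Signature) : S.Intervention := fun _ => none

/-- Extend an intervention by additionally setting `W` to `w`. -/
def intUpdate {S : Signature} (g : S.Intervention) (W : S.V) (w : S.valV W) :
    S.Intervention :=
  fun X => if h : X = W then some (cast (congrArg S.valV h).symm w) else g X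

/-- A causal model `T = (S, F)` over the signature `S`. -/
structure CausalModel (S : Signature) where
  F : ∀ X : S.V, S.Context → (∀ Y : S.V, Y ≠ X → S.valV Y) → S.valV X

/-- `v` is a solution of `T_{X⃗ ← x⃗}(u⃗)` (intervention encoded by `g`): intervened
variables take their set values, and every other variable satisfies its equation. -/
def CausalModel.IsSolution {S : Signature} (T : CausalModel S) (g : S.Intervention)
    (u : S.Context) (v : S.Assignment) : Prop :=
  ∀ X : S.V,
    (∀ x, g X = some x → v X = x) ∧
    (g X = none → v X = T.F X u fun Y _ => v Y)

/-- `T ∈ T_uniq(S)`: the equations of `T_{X⃗ ← x⃗}(u⃗)` have a unique solution, for every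
intervention and every context. -/
def CausalModel.UniqueSolutions {S : Signature} (T : CausalModel S) : Prop :=
  ∀ (g : S.Intervention) (u : S.Context), ∃! v : S.Assignment, T.IsSolution g u v

/-- `T ∈ T_rec(S)`: there is a (strict) total order `≺` on `V` such that `F_X` is
independent of the value of `Y` whenever `X ≺ Y`. -/
def CausalModel.Recursive {S : Signature} (T : CausalModel S) : Prop :=
  ∃ r : S.V → S.V → Prop, IsStrictTotalOrder S.V r ∧
    ∀ (X : S.V) (u : S.Context) (w w' : ∀ Y : S.V, Y ≠ X → S.valV Y),
      (∀ (Y : S.V) (h : Y ≠ X), ¬ r X Y → w Y h = w' Y h) →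
      T.F X u w = T.F X u w'

/-- Boolean combinations of atoms of the form `X(u⃗) = x`. -/
inductive IForm (S : Signature) : Type where
  | atom : (X : S.V) → S.Context → S.valV X → IForm S
  | not : IForm S → IForm S
  | and : IForm S → IForm S → IForm S
  | or : IForm S → IForm S → IForm S

namespace IForm

variable {S : Signature}

/-- The settings `u⃗` of the exogenous variables mentioned in a formula. -/
def mentions : IForm S → Set S.Context
  | atom _ u _ => {u}
  | not φ => φ.mentions
  | and φ ψ => φ.mentions ∪ ψ.mentions
  | or φ ψ => φ.mentions ∪ ψ.mentions

/-- The endogenous variables appearing in a formula. -/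
def vars : IForm S → Set S.V
  | atom X _ _ => {X}
  | not φ => φ.vars
  | and φ ψ => φ.vars ∪ ψ.vars
  | or φ ψ => φ.vars ∪ ψ.vars

/-- Evaluate a Boolean combination of atoms, where the atoms mentioning `u⃗` are
evaluated in the assignment `σ u⃗`. -/
def eval (σ : S.Context → S.Assignment) : IForm S → Prop
  | atom X u x => σ u X = x
  | not φ => ¬ φ.eval σ
  | and φ ψ => φ.eval σ ∧ ψ.eval σ
  | or φ ψ => φ.eval σ ∨ ψ.eval σ

def imp (φ ψ : IForm S) : IForm S := or (not φ) ψ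

/-- `φ ∧ ψ₁ ∧ … ∧ ψₙ`. -/
def conj (φ : IForm S) : List (IForm S) → IForm S
  | [] => φ
  | ψ :: l => and φ (conj ψ l)

/-- `φ ∨ ψ₁ ∨ … ∨ ψₙ`. -/
def disj (φ : IForm S) : List (IForm S) → IForm S
  | [] => φ
  | ψ :: l => or φ (disj ψ l)

/-- Evaluation under an arbitrary truth assignment to the atoms. -/
def pEval (val : ∀ X : S.V, S.Context → S.valV X → Prop) : IForm S → Prop
  | atom X u x => val X u x
  | not φ => ¬ φ.pEval val
  | and φ ψ => φ.pEval val ∧ ψ.pEval val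
  | or φ ψ => φ.pEval val ∨ ψ.pEval val

/-- An instance of a propositional tautology. -/
def Tautology (φ : IForm S) : Prop := ∀ val, φ.pEval val

theorem mentions_nonempty : ∀ φ : IForm S, φ.mentions.Nonempty
  | atom _ u _ => ⟨u, rfl⟩
  | not φ => mentions_nonempty φ
  | and φ _ => (mentions_nonempty φ).imp fun _ h => Set.mem_union_left _ h
  | or φ _ => (mentions_nonempty φ).imp fun _ h => Set.mem_union_left _ h

end IForm

/-- `T ⊨ [X⃗ ← x⃗] φ` : for every choice, for each mentioned setting `u⃗`, of a solution
of `T_{X⃗ ← x⃗}(u⃗)`, the formula `φ` evaluates to true. -/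
def CausalModel.boxSat {S : Signature} (T : CausalModel S) (g : S.Intervention)
    (φ : IForm S) : Prop :=
  ∀ σ : S.Context → S.Assignment,
    (∀ u ∈ φ.mentions, T.IsSolution g u (σ u)) → φ.eval σ

/-- The language `L⁺(S)`: Boolean combinations of basic causal formulas `[Y⃗ ← y⃗] φ`. -/
inductive LPlus (S : Signature) : Type where
  | box : S.Intervention → IForm S → LPlus S
  | not : LPlus S → LPlus S
  | and : LPlus S → LPlus S → LPlus S
  | or : LPlus S → LPlus S → LPlus S

namespace LPlus

variable {S : Signature}

/-- Truth of a causal formula in a causal model. -/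
def sat : LPlus S → CausalModel S → Prop
  | box g φ, T => T.boxSat g φ
  | not φ, T => ¬ φ.sat T
  | and φ ψ, T => φ.sat T ∧ ψ.sat T
  | or φ ψ, T => φ.sat T ∨ ψ.sat T

/-- `⟨X⃗ ← x⃗⟩ φ` abbreviates `¬ [X⃗ ← x⃗] ¬ φ`. -/
def dia (g : S.Intervention) (φ : IForm S) : LPlus S := not (box g (IForm.not φ))

def imp (φ ψ : LPlus S) : LPlus S := or (not φ) ψ

def iff (φ ψ : LPlus S) : LPlus S := and (imp φ ψ) (imp ψ φ)

def conj (φ : LPlus S) : List (LPlus S) → LPlus S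
  | [] => φ
  | ψ :: l => and φ (conj ψ l)

def disj (φ : LPlus S) : List (LPlus S) → LPlus S
  | [] => φ
  | ψ :: l => or φ (disj ψ l)

/-- Membership in the sublanguage `L_uniq(S)`: Boolean combinations of formulas of the
form `[Y⃗ ← y⃗](X(u⃗) = x)`. -/
def InLuniq : LPlus S → Prop
  | box _ φ => ∃ (X : S.V) (u : S.Context) (x : S.valV X), φ = IForm.atom X u x
  | not φ => φ.InLuniq
  | and φ ψ => φ.InLuniq ∧ ψ.InLuniq
  | or φ ψ => φ.InLuniq ∧ ψ.InLuniq

/-- Evaluation under an arbitrary truth assignment to the basic causal formulas. -/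
def pEval (val : S.Intervention → IForm S → Prop) : LPlus S → Prop
  | box g φ => val g φ
  | not φ => ¬ φ.pEval val
  | and φ ψ => φ.pEval val ∧ ψ.pEval val
  | or φ ψ => φ.pEval val ∨ ψ.pEval val

/-- An instance of a propositional tautology. -/
def Tautology (φ : LPlus S) : Prop := ∀ val, φ.pEval val

/-- The endogenous variables appearing in a causal formula (including the variables
set by its interventions). -/
def vars : LPlus S → Set S.V
  | box g φ => {X | g X ≠ none} ∪ φ.vars
  | not φ => φ.vars
  | and φ ψ => φ.vars ∪ ψ.vars
  | or φ ψ => φ.vars ∪ ψ.vars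

/-- The settings of the exogenous variables mentioned in a causal formula. -/
def contexts : LPlus S → Set S.Context
  | box _ φ => φ.mentions
  | not φ => φ.contexts
  | and φ ψ => φ.contexts ∪ ψ.contexts
  | or φ ψ => φ.contexts ∪ ψ.contexts

theorem contexts_nonempty : ∀ φ : LPlus S, φ.contexts.Nonempty
  | box _ φ => φ.mentions_nonempty
  | not φ => contexts_nonempty φ
  | and φ _ => (contexts_nonempty φ).imp fun _ h => Set.mem_union_left _ h
  | or φ _ => (contexts_nonempty φ).imp fun _ h => Set.mem_union_left _ h

end LPlus

/-- `Y` affects `Z` in `T`: for some setting of the exogenous variables and of some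
other endogenous variables, changing the value of `Y` changes the value of `Z`. -/
def CausalModel.Affects {S : Signature} (T : CausalModel S) (Y Z : S.V) : Prop :=
  Y ≠ Z ∧ ∃ (g : S.Intervention) (y : S.valV Y) (u : S.Context) (z z' : S.valV Z),
    g Y = none ∧ g Z = none ∧ z ≠ z' ∧
    T.boxSat (intUpdate g Y y) (IForm.atom Z u z') ∧ T.boxSat g (IForm.atom Z u z)

/-- Provability from a set of axioms using modus ponens. -/
inductive Provable {S : Signature} (Ax : Set (LPlus S)) : LPlus S → Prop
  | ax : ∀ {φ}, φ ∈ Ax → Provable Ax φ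
  | mp : ∀ {φ ψ}, Provable Ax (φ.imp ψ) → Provable Ax φ → Provable Ax ψ

section AuxRec

attribute [local instance] Classical.propDecidable

variable {S : Signature}

/-- Build a canonical solution of a recursive model by well-founded recursion. -/
noncomputable def solAux (T : CausalModel S) (r : S.V → S.V → Prop) (wf : WellFounded r)
    (g : S.Intervention) (u : S.Context) : S.Assignment :=
  wf.fix (fun X ih => (g X).elim
    (T.F X u fun Y _ => if hr : r Y X then ih Y hr else Classical.arbitrary _) id)

lemma solAux_eq (T : CausalModel S) (r : S.V → S.V → Prop) (wf : WellFounded r)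
    (g : S.Intervention) (u : S.Context) (X : S.V) :
    solAux T r wf g u X = (g X).elim
      (T.F X u fun Y _ => if _ : r Y X then solAux T r wf g u Y else Classical.arbitrary _)
      id :=
  wf.fix_eq _ X

lemma solAux_isSolution (T : CausalModel S) (r : S.V → S.V → Prop)
    (hsto : IsStrictTotalOrder S.V r) (wf : WellFounded r)
    (hind : ∀ (X : S.V) (u : S.Context) (w w' : ∀ Y : S.V, Y ≠ X → S.valV Y),
      (∀ (Y : S.V) (h : Y ≠ X), ¬ r X Y → w Y h = w' Y h) → T.F X u w = T.F X u w')
    (g : S.Intervention) (u : S.Context) :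
    T.IsSolution g u (solAux T r wf g u) := by
  intro X
  constructor
  · intro x hx
    rw [solAux_eq, hx]
    rfl
  · intro hx
    rw [solAux_eq, hx]
    apply hind
    intro Y h hnr
    have hYX : r Y X := by
      rcases (or_iff_not_imp_left.2 fun h1 => or_iff_not_imp_right.2 fun h2 => hsto.trichotomous Y X h1 h2 : r Y X ∨ Y = X ∨ r X Y) with h' | h' | h'
      · exact h'
      · exact absurd h' h
      · exact absurd h' hnr
    rw [dif_pos hYX]

lemma solAux_agree (T : CausalModel S) (r : S.V → S.V → Prop)
    (hsto : IsStrictTotalOrder S.V r) (wf : WellFounded r)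
    (hind : ∀ (X : S.V) (u : S.Context) (w w' : ∀ Y : S.V, Y ≠ X → S.valV Y),
      (∀ (Y : S.V) (h : Y ≠ X), ¬ r X Y → w Y h = w' Y h) → T.F X u w = T.F X u w')
    (g g' : S.Intervention) (u : S.Context) (Y : S.V)
    (hgg : ∀ W, W ≠ Y → g W = g' W) :
    ∀ W, r W Y → solAux T r wf g u W = solAux T r wf g' u W := by
  intro W
  induction W using wf.induction with
  | _ W ih =>
    intro hWY
    have hWne : W ≠ Y := by
      rintro rfl
      exact hsto.toIsStrictOrder.toIrrefl.irrefl W hWY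
    rw [solAux_eq, solAux_eq, ← hgg W hWne]
    cases hgW : g W with
    | some w => rfl
    | none =>
      simp only [Option.elim]
      apply hind
      intro Y' h hnr
      have hY'W : r Y' W := by
        rcases (or_iff_not_imp_left.2 fun h1 => or_iff_not_imp_right.2 fun h2 => hsto.trichotomous Y' W h1 h2 : r Y' W ∨ Y' = W ∨ r W Y') with h' | h' | h'
        · exact h'
        · exact absurd h' h
        · exact absurd h' hnr
      have hY'Y : r Y' Y := hsto.toIsStrictOrder.toIsTrans.trans _ _ _ hY'W hWY
      rw [dif_pos hY'W, dif_pos hY'W]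
      exact ih Y' hY'W hY'Y

lemma affects_rel (T : CausalModel S) (r : S.V → S.V → Prop)
    (hsto : IsStrictTotalOrder S.V r)
    (hind : ∀ (X : S.V) (u : S.Context) (w w' : ∀ Y : S.V, Y ≠ X → S.valV Y),
      (∀ (Y : S.V) (h : Y ≠ X), ¬ r X Y → w Y h = w' Y h) → T.F X u w = T.F X u w')
    {Y Z : S.V} (h : T.Affects Y Z) : r Y Z := by
  haveI : IsTrans S.V r := hsto.toIsStrictOrder.toIsTrans
  haveI : IsIrrefl S.V r := hsto.toIsStrictOrder.toIrrefl
  have wf : WellFounded r := Finite.wellFounded_of_trans_of_irrefl r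
  obtain ⟨hYZ, g, y, u, z, z', hgY, hgZ, hzz, hbox', hbox⟩ := h
  by_contra hr
  have hZY : r Z Y := by
    rcases (or_iff_not_imp_left.2 fun h1 => or_iff_not_imp_right.2 fun h2 => hsto.trichotomous Y Z h1 h2 : r Y Z ∨ Y = Z ∨ r Z Y) with h' | h' | h'
    · exact absurd h' hr
    · exact absurd h' hYZ
    · exact h'
  set g' := intUpdate g Y y with hg'
  have h1 : solAux T r wf g u Z = z := by
    apply hbox (fun _ => solAux T r wf g u)
    intro u' hu'
    obtain rfl : u' = u := hu'
    exact solAux_isSolution T r hsto wf hind g u'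
  have h2 : solAux T r wf g' u Z = z' := by
    apply hbox' (fun _ => solAux T r wf g' u)
    intro u' hu'
    obtain rfl : u' = u := hu'
    exact solAux_isSolution T r hsto wf hind g' u'
  have hgg : ∀ W, W ≠ Y → g W = g' W := by
    intro W hW
    simp [hg', intUpdate, hW]
  have hagree := solAux_agree T r hsto wf hind g g' u Y hgg Z hZY
  exact hzz (h1 ▸ h2 ▸ hagree)

end AuxRec

/-- soundness of recursiveness (C6) in recursive models: if
`X_0 ⤳ X_1, …, X_{k−1} ⤳ X_k` in `T` then `¬(X_k ⤳ X_0)` in `T`. -/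
theorem recursiveness_sound (S : Signature) (hS : S.Standard) (T : CausalModel S)
    (hT : T.Recursive) (k : ℕ) (X : Fin (k + 1) → S.V)
    (hchain : ∀ i : Fin k, T.Affects (X i.castSucc) (X i.succ)) :
    ¬ T.Affects (X (Fin.last k)) (X 0) := by
  intro haff
  obtain ⟨r, hsto, hind⟩ := hT
  have hlast : r (X (Fin.last k)) (X 0) := affects_rel T r hsto hind haff
  have irr := hsto.toIsStrictOrder.toIrrefl.irrefl
  have tr := hsto.toIsStrictOrder.toIsTrans.trans
  have key : ∀ n (hn : n < k + 1), 0 < n → r (X 0) (X ⟨n, hn⟩) := by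
    intro n
    induction n with
    | zero => intro _ h; omega
    | succ m ih =>
      intro hn _
      have hm : m < k := by omega
      have haff' := affects_rel T r hsto hind (hchain ⟨m, hm⟩)
      have hcs : (⟨m, hm⟩ : Fin k).castSucc = ⟨m, by omega⟩ := rfl
      have hsucc : (⟨m, hm⟩ : Fin k).succ = ⟨m + 1, hn⟩ := rfl
      rw [hcs, hsucc] at haff'
      rcases Nat.eq_zero_or_pos m with hm0 | hm0
      · subst hm0
        have h0 : (⟨0, by omega⟩ : Fin (k + 1)) = 0 := rfl
        rwa [h0] at haff'
      · exact tr _ _ _ (ih (by omega) hm0) haff'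
  rcases Nat.eq_zero_or_pos k with hk | hk
  · subst hk
    exact irr _ hlast
  · have hk' : (⟨k, by omega⟩ : Fin (k + 1)) = Fin.last k := rfl
    have := key k (by omega) hk
    rw [hk'] at this
    exact irr _ (tr _ _ _ hlast this)
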